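/- For a permutation w in the symmetric group S_n that contains the pattern 3412, the minimum height of a 3412 occurrence in w equals the minimum content of a 3412 occurrence in w. -/
import Mathlib


open Equiv

variable {n : ℕ}

/-- An occurrence of the pattern `3412` in `w ∈ S_n`: positions `a < b < c < d`
with `w(c) < w(d) < w(a) < w(b)`. -/
def Occ3412 (w : Perm (Fin n)) (a b c d : Fin n) : Prop :=
  a < b ∧ b < c ∧ c < d ∧ w c < w d ∧ w d < w a ∧ w a < w b

/-- The height of an occurrence of `3412` at positions `a < b < c < d`:
`w(a) - w(d)`. -/
def occHeight (w : Perm (Fin n)) (a d : Fin n) : ℕ := (w a).val - (w d).val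

/-- The content of an occurrence of `3412` at positions `a < b < c < d`:
`1 + |{i : b < i < c, w(d) < w(i) < w(a)}|`. -/
noncomputable def occContent (w : Perm (Fin n)) (a b c d : Fin n) : ℕ :=
  1 + Set.ncard {i : Fin n | b < i ∧ i < c ∧ w d < w i ∧ w i < w a}

/-- `w` contains the pattern `3412`. -/
def Contains3412 (w : Perm (Fin n)) : Prop := ∃ a b c d, Occ3412 w a b c d

/-- `mh(w)`: the minimum height of a `3412` occurrence in `w`. -/
noncomputable def mh (w : Perm (Fin n)) : ℕ :=
  sInf {m | ∃ a b c d, Occ3412 w a b c d ∧ occHeight w a d = m}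

/-- `mcontent(w)`: the minimum content of a `3412` occurrence in `w`. -/
noncomputable def mcontent (w : Perm (Fin n)) : ℕ :=
  sInf {m | ∃ a b c d, Occ3412 w a b c d ∧ occContent w a b c d = m}

/-- The number of positions whose value lies strictly between `w d` and `w a`. -/
lemma ncard_between (w : Perm (Fin n)) (a d : Fin n) :
    {i : Fin n | w d < w i ∧ w i < w a}.ncard = (w a).val - (w d).val - 1 := by
  have h1 : {i : Fin n | w d < w i ∧ w i < w a} = ⇑w ⁻¹' (Set.Ioo (w d) (w a)) := by
    ext i; simp [Set.mem_Ioo]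
  have h2 : ⇑w ⁻¹' (Set.Ioo (w d) (w a)) = ⇑w.symm '' (Set.Ioo (w d) (w a)) := by
    rw [Equiv.image_eq_preimage_symm]
    simp
  rw [h1, h2, Set.ncard_image_of_injective _ w.symm.injective,
    ← Finset.coe_Ioo, Set.ncard_coe_finset, Fin.card_Ioo]

lemma content_le_height (w : Perm (Fin n)) {a b c d : Fin n} (h : Occ3412 w a b c d) :
    occContent w a b c d ≤ occHeight w a d := by
  obtain ⟨hab, hbc, hcd, hcd', hda, hab'⟩ := h
  have hsub : {i : Fin n | b < i ∧ i < c ∧ w d < w i ∧ w i < w a}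
      ⊆ {i : Fin n | w d < w i ∧ w i < w a} := fun i hi => ⟨hi.2.2.1, hi.2.2.2⟩
  have hle := Set.ncard_le_ncard hsub (Set.toFinite _)
  rw [ncard_between] at hle
  have : (w d).val < (w a).val := hda
  unfold occContent occHeight
  omega

lemma key (w : Perm (Fin n)) :
    ∀ m : ℕ, ∀ a b c d : Fin n, Occ3412 w a b c d → occHeight w a d = m →
      ∃ p q r s, Occ3412 w p q r s ∧ occHeight w p s ≤ occContent w a b c d := by
  intro m
  induction m using Nat.strong_induction_on with
  | _ m ih =>
    intro a b c d hocc hm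
    by_cases hcase : occHeight w a d ≤ occContent w a b c d
    · exact ⟨a, b, c, d, hocc, hcase⟩
    push_neg at hcase
    obtain ⟨hab, hbc, hcd, hc, hda, hb⟩ := hocc
    -- there is a value between w d and w a outside the region
    set S := {i : Fin n | b < i ∧ i < c ∧ w d < w i ∧ w i < w a} with hS
    set T := {i : Fin n | w d < w i ∧ w i < w a} with hT
    have hTcard : T.ncard = (w a).val - (w d).val - 1 := ncard_between w a d
    have hda' : (w d).val < (w a).val := hda
    have hcard : S.ncard < T.ncard := by
      have : occContent w a b c d = 1 + S.ncard := rfl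
      have h2 : occHeight w a d = (w a).val - (w d).val := rfl
      omega
    have hnot : ¬ T ⊆ S := fun hsub => absurd (Set.ncard_le_ncard hsub (Set.toFinite _))
      (by omega)
    obtain ⟨i, hiT, hiS⟩ := Set.not_subset.mp hnot
    obtain ⟨hdi, hia⟩ : w d < w i ∧ w i < w a := hiT
    have hib : i ≠ b := fun h => by subst h; exact absurd (hia.trans hb) (lt_irrefl _)
    have hic : i ≠ c := fun h => by subst h; exact absurd (hc.trans hdi) (lt_irrefl _)
    have hout : i < b ∨ c < i := by
      by_contra hx
      push_neg at hx
      exact hiS ⟨lt_of_le_of_ne hx.1 (Ne.symm hib), lt_of_le_of_ne hx.2 hic, hdi, hia⟩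
    rcases hout with hlt | hgt
    · -- new occurrence (i, b, c, d)
      have hocc' : Occ3412 w i b c d := ⟨hlt, hbc, hcd, hc, hdi, hia.trans hb⟩
      have hheight : occHeight w i d < m := by
        have h1 : occHeight w i d = (w i).val - (w d).val := rfl
        have h2 : (w i).val < (w a).val := hia
        have h3 : (w d).val < (w i).val := hdi
        have h4 : occHeight w a d = (w a).val - (w d).val := rfl
        omega
      obtain ⟨p, q, r, s, ho, hle⟩ := ih _ hheight i b c d hocc' rfl
      refine ⟨p, q, r, s, ho, hle.trans ?_⟩
      unfold occContent
      have hsub : {j : Fin n | b < j ∧ j < c ∧ w d < w j ∧ w j < w i} ⊆ S :=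
        fun j hj => ⟨hj.1, hj.2.1, hj.2.2.1, hj.2.2.2.trans hia⟩
      exact Nat.add_le_add_left (Set.ncard_le_ncard hsub (Set.toFinite _)) 1
    · -- new occurrence (a, b, c, i)
      have hocc' : Occ3412 w a b c i := ⟨hab, hbc, hgt, hc.trans hdi, hia, hb⟩
      have hheight : occHeight w a i < m := by
        have h1 : occHeight w a i = (w a).val - (w i).val := rfl
        have h2 : (w i).val < (w a).val := hia
        have h3 : (w d).val < (w i).val := hdi
        have h4 : occHeight w a d = (w a).val - (w d).val := rfl
        omega
      obtain ⟨p, q, r, s, ho, hle⟩ := ih _ hheight a b c i hocc' rfl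
      refine ⟨p, q, r, s, ho, hle.trans ?_⟩
      unfold occContent
      have hsub : {j : Fin n | b < j ∧ j < c ∧ w i < w j ∧ w j < w a} ⊆ S :=
        fun j hj => ⟨hj.1, hj.2.1, hdi.trans hj.2.2.1, hj.2.2.2⟩
      exact Nat.add_le_add_left (Set.ncard_le_ncard hsub (Set.toFinite _)) 1

/-- For `w ∈ S_n` containing the pattern `3412`, the minimum height of a `3412`
occurrence equals the minimum content of a `3412` occurrence. -/
theorem stmt_3 (w : Perm (Fin n)) (hw : Contains3412 w) : mh w = mcontent w := by
  obtain ⟨a0, b0, c0, d0, h0⟩ := hw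
  have hH : {m | ∃ a b c d, Occ3412 w a b c d ∧ occHeight w a d = m}.Nonempty :=
    ⟨_, a0, b0, c0, d0, h0, rfl⟩
  have hC : {m | ∃ a b c d, Occ3412 w a b c d ∧ occContent w a b c d = m}.Nonempty :=
    ⟨_, a0, b0, c0, d0, h0, rfl⟩
  apply le_antisymm
  · -- mh ≤ mcontent
    obtain ⟨a, b, c, d, hocc, heq⟩ := Nat.sInf_mem hC
    obtain ⟨p, q, r, s, ho, hle⟩ := key w (occHeight w a d) a b c d hocc rfl
    calc mh w ≤ occHeight w p s := Nat.sInf_le ⟨p, q, r, s, ho, rfl⟩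
      _ ≤ occContent w a b c d := hle
      _ = mcontent w := heq
  · -- mcontent ≤ mh
    obtain ⟨a, b, c, d, hocc, heq⟩ := Nat.sInf_mem hH
    calc mcontent w ≤ occContent w a b c d := Nat.sInf_le ⟨a, b, c, d, hocc, rfl⟩
      _ ≤ occHeight w a d := content_le_height w hocc
      _ = mh w := heq
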